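/- Let 0 < q < 1 and let u : I → ℂ be a function defined in a neighborhood of 1 with lim_{q→1} u(q) = u where 0 < u < 1. Then for any real a, b, the limit as q → 1 of (q^a u(q); q)_∞ / (q^b u(q); q)_∞ equals (1-u)^{b-a}. -/

import Mathlib

open Real Filter Set

/-- `y ↦ -log (1 - exp y)` is convex on `(-∞, 0)`. -/
lemma aux_convexH : ConvexOn ℝ (Set.Iio (0:ℝ)) (fun y => -Real.log (1 - Real.exp y)) := by
  have hI : interior (Set.Iio (0:ℝ)) = Set.Iio 0 := interior_Iio
  have hne : ∀ y ∈ Set.Iio (0:ℝ), 1 - Real.exp y ≠ 0 := by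
    intro y hy
    have := Real.exp_lt_one_iff.mpr hy
    linarith
  refine convexOn_of_hasDerivWithinAt2_nonneg (f' := fun y => Real.exp y / (1 - Real.exp y))
    (f'' := fun y => Real.exp y / (1 - Real.exp y)^2) (convex_Iio 0) ?_ ?_ ?_ ?_
  · exact ((continuousOn_const.sub Real.continuous_exp.continuousOn).log hne).neg
  · intro y hy
    rw [hI] at hy
    have h1 : HasDerivAt (fun y => 1 - Real.exp y) (-Real.exp y) y :=
      (Real.hasDerivAt_exp y).const_sub 1
    have h2 : HasDerivAt (fun y => -Real.log (1 - Real.exp y))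
        (Real.exp y / (1 - Real.exp y)) y := by
      have := (h1.log (hne y hy)).neg
      exact this.congr_deriv (by ring)
    exact h2.hasDerivWithinAt
  · intro y hy
    rw [hI] at hy
    have h1 : HasDerivAt (fun y => 1 - Real.exp y) (-Real.exp y) y :=
      (Real.hasDerivAt_exp y).const_sub 1
    have h2 : HasDerivAt (fun y => Real.exp y / (1 - Real.exp y))
        (Real.exp y / (1 - Real.exp y)^2) y := by
      have := (Real.hasDerivAt_exp y).div h1 (hne y hy)
      have h3 := hne y hy
      exact this.congr_deriv (by ring)
    exact h2.hasDerivWithinAt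
  · intro y hy
    positivity


/-- convexity of `x ↦ -log (1 - v q^x)` on the region where `v q^x < 1`. -/
lemma aux_convexG (q v : ℝ) (hq0 : 0 < q) (hq1 : q < 1) (hv : 0 < v) :
    ConvexOn ℝ {x : ℝ | v * q ^ x < 1} (fun x : ℝ => -Real.log (1 - v * q ^ x)) := by
  have hlq : Real.log q < 0 := Real.log_neg hq0 hq1
  set A : ℝ →ᵃ[ℝ] ℝ := AffineMap.lineMap (Real.log v) (Real.log v + Real.log q) with hA
  have hAx : ∀ x : ℝ, A x = Real.log v + x * Real.log q := by
    intro x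
    simp [hA, AffineMap.lineMap_apply]
    ring
  have hexp : ∀ x : ℝ, Real.exp (A x) = v * q ^ x := by
    intro x
    rw [hAx, Real.exp_add, Real.exp_log hv, Real.rpow_def_of_pos hq0, mul_comm x]
  have hset : A ⁻¹' (Set.Iio (0:ℝ)) = {x : ℝ | v * q ^ x < 1} := by
    ext x
    simp only [Set.mem_preimage, Set.mem_Iio, Set.mem_setOf_eq]
    rw [← Real.exp_lt_one_iff (x := A x), hexp]
  have := aux_convexH.comp_affineMap A
  rw [hset] at this
  refine this.congr ?_
  intro x _
  simp only [Function.comp_apply, hexp x]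


section

variable {q v : ℝ}

lemma aux_pow_le (hq0 : 0 < q) (hq1 : q < 1) {x y : ℝ} (hxy : x ≤ y) :
    q ^ y ≤ q ^ x :=
  Real.rpow_le_rpow_of_exponent_ge hq0 hq1.le hxy

lemma aux_factor_pos (hq0 : 0 < q) (hq1 : q < 1) (hv : 0 < v) {x : ℝ} (hx : v * q ^ x < 1)
    {y : ℝ} (hxy : x ≤ y) : 0 < 1 - v * q ^ y := by
  have h1 : v * q ^ y ≤ v * q ^ x :=
    mul_le_mul_of_nonneg_left (aux_pow_le hq0 hq1 hxy) hv.le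
  linarith

lemma aux_g_nonneg (hq0 : 0 < q) (hq1 : q < 1) (hv : 0 < v) {x : ℝ} (hx : v * q ^ x < 1)
    {y : ℝ} (hxy : x ≤ y) : 0 ≤ -Real.log (1 - v * q ^ y) := by
  have h0 := aux_factor_pos hq0 hq1 hv hx hxy
  have h1 : v * q ^ y ≤ v * q ^ x :=
    mul_le_mul_of_nonneg_left (aux_pow_le hq0 hq1 hxy) hv.le
  have hpos : 0 < v * q ^ y := by positivity
  have : Real.log (1 - v * q ^ y) ≤ 0 := Real.log_nonpos (by linarith) (by linarith)
  linarith

lemma aux_summable (hq0 : 0 < q) (hq1 : q < 1) (hv : 0 < v) {x : ℝ} (hx : v * q ^ x < 1) :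
    Summable (fun i : ℕ => -Real.log (1 - v * q ^ (x + i))) := by
  have hK : 0 < 1 - v * q ^ x := by linarith
  refine Summable.of_nonneg_of_le
    (fun i => aux_g_nonneg hq0 hq1 hv hx (le_add_of_nonneg_right (Nat.cast_nonneg i)))
    (fun i => ?_)
    (((summable_geometric_of_lt_one hq0.le hq1)).mul_left (v * q ^ x / (1 - v * q ^ x)))
  have hqi : q ^ (x + (i:ℝ)) = q ^ x * q ^ (i:ℕ) := by
    rw [Real.rpow_add hq0, Real.rpow_natCast]
  have hile : (q:ℝ) ^ (i:ℕ) ≤ 1 := pow_le_one₀ hq0.le hq1.le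
  have hipos : (0:ℝ) < q ^ (i:ℕ) := by positivity
  set t := v * q ^ (x + (i:ℝ)) with ht
  have ht0 : 0 < t := by positivity
  have htK : t ≤ v * q ^ x := by
    rw [ht, hqi, ← mul_assoc]
    exact mul_le_of_le_one_right (by positivity) hile
  have ht1 : 0 < 1 - t := by linarith
  have hlog : -Real.log (1 - t) ≤ t / (1 - t) := by
    have h2 : Real.log (1 - t)⁻¹ ≤ (1 - t)⁻¹ - 1 :=
      Real.log_le_sub_one_of_pos (by positivity)
    rw [Real.log_inv] at h2
    have h3 : (1 - t)⁻¹ - 1 = t / (1 - t) := by field_simp; ring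
    linarith [h2, h3.le]
  have hmono : t / (1 - t) ≤ t / (1 - v * q ^ x) := by
    apply div_le_div_of_nonneg_left ht0.le hK
    linarith
  calc -Real.log (1 - t) ≤ t / (1 - t) := hlog
    _ ≤ t / (1 - v * q ^ x) := hmono
    _ = v * q ^ x / (1 - v * q ^ x) * q ^ (i:ℕ) := by
        rw [ht, hqi]; ring

lemma aux_tprod (hq0 : 0 < q) (hq1 : q < 1) (hv : 0 < v) {x : ℝ} (hx : v * q ^ x < 1) :
    (∏' i : ℕ, (1 - v * q ^ (x + (i:ℝ)))) =
      Real.exp (-(∑' i : ℕ, -Real.log (1 - v * q ^ (x + (i:ℝ))))) := by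
  have hpos : ∀ i : ℕ, 0 < 1 - v * q ^ (x + (i:ℝ)) :=
    fun i => aux_factor_pos hq0 hq1 hv hx (le_add_of_nonneg_right (Nat.cast_nonneg i))
  have hs : Summable (fun i : ℕ => Real.log (1 - v * q ^ (x + (i:ℝ)))) := by
    simpa using (aux_summable hq0 hq1 hv hx).neg
  have hp := hs.hasSum.rexp
  have heq : (Real.exp ∘ fun i : ℕ => Real.log (1 - v * q ^ (x + (i:ℝ)))) =
      fun i : ℕ => 1 - v * q ^ (x + (i:ℝ)) :=
    funext fun i => Real.exp_log (hpos i)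
  rw [heq] at hp
  rw [hp.tprod_eq]
  congr 1
  rw [← tsum_neg]
  simp

lemma aux_telescope (hq0 : 0 < q) (hq1 : q < 1) (hv : 0 < v) {x : ℝ} (hx : v * q ^ x < 1) :
    (∑' i : ℕ, -Real.log (1 - v * q ^ (x + (i:ℝ)))) -
      (∑' i : ℕ, -Real.log (1 - v * q ^ (x + 1 + (i:ℝ)))) = -Real.log (1 - v * q ^ x) := by
  have hsum := aux_summable hq0 hq1 hv hx
  have h0 := Summable.tsum_eq_zero_add hsum
  have h1 : (∑' i : ℕ, -Real.log (1 - v * q ^ (x + ((i:ℕ)+1:ℕ)))) =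
      ∑' i : ℕ, -Real.log (1 - v * q ^ (x + 1 + (i:ℝ))) := by
    apply tsum_congr
    intro i
    rw [show x + (((i:ℕ)+1:ℕ):ℝ) = x + 1 + (i:ℝ) by push_cast; ring]
  rw [h1] at h0
  rw [h0]
  simp


lemma aux_bounds (hq0 : 0 < q) (hq1 : q < 1) (hv : 0 < v) {x y : ℝ} (hxy : x ≤ y)
    (hc : v * q ^ (x - 1) < 1) :
    (y - x) * (-Real.log (1 - v * q ^ y)) ≤
      (∑' i : ℕ, -Real.log (1 - v * q ^ (x + (i:ℝ)))) -
        (∑' i : ℕ, -Real.log (1 - v * q ^ (y + (i:ℝ)))) ∧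
    (∑' i : ℕ, -Real.log (1 - v * q ^ (x + (i:ℝ)))) -
        (∑' i : ℕ, -Real.log (1 - v * q ^ (y + (i:ℝ)))) ≤
      (y - x) * (-Real.log (1 - v * q ^ (x - 1))) := by
  have hmem : ∀ t : ℝ, x - 1 ≤ t → v * q ^ t < 1 := fun t ht =>
    lt_of_le_of_lt (mul_le_mul_of_nonneg_left (aux_pow_le hq0 hq1 ht) hv.le) hc
  rcases eq_or_lt_of_le hxy with rfl | hlt
  · simp
  have hs : 0 < y - x := by linarith
  set g : ℝ → ℝ := fun t => -Real.log (1 - v * q ^ t) with hg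
  have hconv := aux_convexG q v hq0 hq1 hv
  -- summability
  have hsx : Summable (fun i : ℕ => g (x + (i:ℝ))) :=
    aux_summable hq0 hq1 hv (hmem x (by linarith))
  have hsy : Summable (fun i : ℕ => g (y + (i:ℝ))) :=
    aux_summable hq0 hq1 hv (hmem y (by linarith))
  have hsy1 : Summable (fun i : ℕ => g (y + 1 + (i:ℝ))) :=
    aux_summable hq0 hq1 hv (hmem (y + 1) (by linarith))
  have hsx1 : Summable (fun i : ℕ => g (x - 1 + (i:ℝ))) :=
    aux_summable hq0 hq1 hv (hmem (x - 1) (by linarith))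
  have hin : ∀ t : ℝ, x - 1 ≤ t → t ∈ {x : ℝ | v * q ^ x < 1} := fun t ht => hmem t ht
  have hi0 : ∀ i : ℕ, (0:ℝ) ≤ (i:ℝ) := fun i => Nat.cast_nonneg i
  -- per-term lower bound
  have key1 : ∀ i : ℕ, (y - x) * (g (y + (i:ℝ)) - g (y + 1 + (i:ℝ))) ≤
      g (x + (i:ℝ)) - g (y + (i:ℝ)) := by
    intro i
    have h := hconv.slope_mono_adjacent (hin (x + i) (by have := hi0 i; linarith))
      (hin (y + 1 + i) (by have := hi0 i; linarith))
      (show x + (i:ℝ) < y + i by linarith) (show y + (i:ℝ) < y + 1 + i by linarith)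
    rw [show y + (i:ℝ) - (x + i) = y - x by ring, show y + 1 + (i:ℝ) - (y + i) = 1 by ring,
      div_one] at h
    have h2 := (div_le_iff₀ hs).mp h
    simp only [hg]
    nlinarith
  -- per-term upper bound
  have key2 : ∀ i : ℕ, g (x + (i:ℝ)) - g (y + (i:ℝ)) ≤
      (y - x) * (g (x - 1 + (i:ℝ)) - g (x + (i:ℝ))) := by
    intro i
    have h := hconv.slope_mono_adjacent (hin (x - 1 + i) (by have := hi0 i; linarith))
      (hin (y + i) (by have := hi0 i; linarith))
      (show x - 1 + (i:ℝ) < x + i by linarith) (show x + (i:ℝ) < y + i by linarith)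
    rw [show x + (i:ℝ) - (x - 1 + i) = 1 by ring, show y + (i:ℝ) - (x + i) = y - x by ring,
      div_one] at h
    have h2 := (le_div_iff₀ hs).mp h
    simp only [hg]
    nlinarith
  have hdiff : (∑' i : ℕ, g (x + (i:ℝ))) - (∑' i : ℕ, g (y + (i:ℝ))) =
      ∑' i : ℕ, (g (x + (i:ℝ)) - g (y + (i:ℝ))) := (Summable.tsum_sub hsx hsy).symm
  constructor
  · rw [hdiff]
    calc (y - x) * (-Real.log (1 - v * q ^ y))
        = (y - x) * ((∑' i : ℕ, g (y + (i:ℝ))) - (∑' i : ℕ, g (y + 1 + (i:ℝ)))) := by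
          rw [aux_telescope hq0 hq1 hv (hmem y (by linarith))]
      _ = ∑' i : ℕ, (y - x) * (g (y + (i:ℝ)) - g (y + 1 + (i:ℝ))) := by
          rw [tsum_mul_left, Summable.tsum_sub hsy hsy1]
      _ ≤ ∑' i : ℕ, (g (x + (i:ℝ)) - g (y + (i:ℝ))) :=
          Summable.tsum_le_tsum key1 ((hsy.sub hsy1).mul_left _) (hsx.sub hsy)
  · rw [hdiff]
    have htel : (∑' i : ℕ, g (x - 1 + (i:ℝ))) - (∑' i : ℕ, g (x + (i:ℝ))) =
        -Real.log (1 - v * q ^ (x - 1)) := by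
      have := aux_telescope hq0 hq1 hv (hmem (x-1) le_rfl)
      simp only [show ∀ z : ℝ, x - 1 + 1 + z = x + z from fun z => by ring] at this
      exact this
    calc ∑' i : ℕ, (g (x + (i:ℝ)) - g (y + (i:ℝ)))
        ≤ ∑' i : ℕ, (y - x) * (g (x - 1 + (i:ℝ)) - g (x + (i:ℝ))) :=
          Summable.tsum_le_tsum key2 (hsx.sub hsy) ((hsx1.sub hsx).mul_left _)
      _ = (y - x) * ((∑' i : ℕ, g (x - 1 + (i:ℝ))) - (∑' i : ℕ, g (x + (i:ℝ)))) := by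
          rw [tsum_mul_left, Summable.tsum_sub hsx1 hsx]
      _ = (y - x) * (-Real.log (1 - v * q ^ (x - 1))) := by rw [htel]
end



lemma aux_main (a b u0 : ℝ) (hu0 : 0 < u0) (hu1 : u0 < 1) (hab : a ≤ b) (u : ℝ → ℝ)
    (hu : Filter.Tendsto u (nhdsWithin 1 (Set.Ioo (0 : ℝ) 1)) (nhds u0)) :
    Filter.Tendsto
      (fun q : ℝ =>
        (∏' i : ℕ, (1 - q ^ a * u q * q ^ i)) /
          (∏' i : ℕ, (1 - q ^ b * u q * q ^ i)))
      (nhdsWithin 1 (Set.Ioo (0 : ℝ) 1))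
      (nhds ((1 - u0) ^ (b - a))) := by
  set L := nhdsWithin (1:ℝ) (Set.Ioo (0:ℝ) 1) with hL
  have hu0' : (0:ℝ) < 1 - u0 := by linarith
  -- limit of q ↦ q ^ y
  have hpow : ∀ y : ℝ, Tendsto (fun q : ℝ => q ^ y) L (nhds 1) := by
    intro y
    have h := (Real.continuousAt_rpow_const 1 y (Or.inl one_ne_zero)).tendsto
    rw [Real.one_rpow] at h
    exact h.mono_left nhdsWithin_le_nhds
  -- limit of q ↦ -log (1 - u q * q ^ y)
  have hG : ∀ y : ℝ, Tendsto (fun q : ℝ => -Real.log (1 - u q * q ^ y)) L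
      (nhds (-Real.log (1 - u0))) := by
    intro y
    have h0 : Tendsto (fun q : ℝ => u q * q ^ y) L (nhds u0) := by
      have := hu.mul (hpow y); rwa [mul_one] at this
    have h1 : Tendsto (fun q : ℝ => 1 - u q * q ^ y) L (nhds (1 - u0)) :=
      tendsto_const_nhds.sub h0
    exact ((Real.continuousAt_log (ne_of_gt hu0')).tendsto.comp h1).neg
  -- eventually good q
  have hev : ∀ᶠ q in L, (0 < q ∧ q < 1) ∧ 0 < u q ∧ u q * q ^ (a - 1) < 1 := by
    have e1 : ∀ᶠ q in L, q ∈ Set.Ioo (0:ℝ) 1 := eventually_mem_nhdsWithin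
    have e2 : ∀ᶠ q in L, 0 < u q := hu.eventually (eventually_gt_nhds hu0)
    have e3 : ∀ᶠ q in L, u q * q ^ (a - 1) < 1 := by
      have h1 : Tendsto (fun q : ℝ => u q * q ^ (a - 1)) L (nhds u0) := by
        have := hu.mul (hpow (a - 1)); rwa [mul_one] at this
      exact h1.eventually (eventually_lt_nhds hu1)
    filter_upwards [e1, e2, e3] with q h1 h2 h3
    exact ⟨⟨h1.1, h1.2⟩, h2, h3⟩
  -- squeeze for the difference of log-sums
  have hsq : Tendsto (fun q : ℝ =>
      (∑' i : ℕ, -Real.log (1 - u q * q ^ (b + (i:ℝ)))) -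
      (∑' i : ℕ, -Real.log (1 - u q * q ^ (a + (i:ℝ))))) L
      (nhds ((b - a) * Real.log (1 - u0))) := by
    have l1 : Tendsto (fun q : ℝ => -((b - a) * (-Real.log (1 - u q * q ^ (a - 1))))) L
        (nhds ((b - a) * Real.log (1 - u0))) := by
      have h := (((hG (a - 1)).const_mul (b - a))).neg
      convert h using 2
      ring
    have l2 : Tendsto (fun q : ℝ => -((b - a) * (-Real.log (1 - u q * q ^ b)))) L
        (nhds ((b - a) * Real.log (1 - u0))) := by
      have h := (((hG b).const_mul (b - a))).neg
      convert h using 2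
      ring
    refine tendsto_of_tendsto_of_tendsto_of_le_of_le' l1 l2 ?_ ?_
    · filter_upwards [hev] with q hq
      obtain ⟨⟨hq0, hq1⟩, hv, hc⟩ := hq
      have := (aux_bounds hq0 hq1 hv hab hc).2
      linarith
    · filter_upwards [hev] with q hq
      obtain ⟨⟨hq0, hq1⟩, hv, hc⟩ := hq
      have := (aux_bounds hq0 hq1 hv hab hc).1
      linarith
  have hexp := (Real.continuous_exp.tendsto _).comp hsq
  have hval : Real.exp ((b - a) * Real.log (1 - u0)) = (1 - u0) ^ (b - a) := by
    rw [Real.rpow_def_of_pos hu0', mul_comm]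
  rw [hval] at hexp
  refine Tendsto.congr' ?_ hexp
  filter_upwards [hev] with q hq
  obtain ⟨⟨hq0, hq1⟩, hv, hc⟩ := hq
  have hca : u q * q ^ a < 1 :=
    lt_of_le_of_lt (mul_le_mul_of_nonneg_left (aux_pow_le hq0 hq1 (by linarith)) hv.le) hc
  have hcb : u q * q ^ b < 1 :=
    lt_of_le_of_lt (mul_le_mul_of_nonneg_left (aux_pow_le hq0 hq1 (by linarith)) hv.le) hc
  have ea : (∏' i : ℕ, (1 - q ^ a * u q * q ^ i)) =
      ∏' i : ℕ, (1 - u q * q ^ (a + (i:ℝ))) := by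
    apply tprod_congr
    intro i
    rw [Real.rpow_add hq0, Real.rpow_natCast]
    ring_nf
  have eb : (∏' i : ℕ, (1 - q ^ b * u q * q ^ i)) =
      ∏' i : ℕ, (1 - u q * q ^ (b + (i:ℝ))) := by
    apply tprod_congr
    intro i
    rw [Real.rpow_add hq0, Real.rpow_natCast]
    ring_nf
  show Real.exp _ = _
  rw [ea, eb, aux_tprod hq0 hq1 hv hca, aux_tprod hq0 hq1 hv hcb, ← Real.exp_sub]
  congr 1
  ring


/-- Limit of a ratio of infinite q-Pochhammer symbols as `q → 1⁻`:
if `u(q) → u₀ ∈ (0,1)`, then `(qᵃ u(q); q)_∞ / (qᵇ u(q); q)_∞ → (1-u₀)^(b-a)`. -/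
theorem qPochInf_ratio_limit (a b u0 : ℝ) (hu0 : 0 < u0) (hu1 : u0 < 1)
    (u : ℝ → ℝ)
    (hu : Filter.Tendsto u (nhdsWithin 1 (Set.Ioo (0 : ℝ) 1)) (nhds u0)) :
    Filter.Tendsto
      (fun q : ℝ =>
        (∏' i : ℕ, (1 - q ^ a * u q * q ^ i)) /
          (∏' i : ℕ, (1 - q ^ b * u q * q ^ i)))
      (nhdsWithin 1 (Set.Ioo (0 : ℝ) 1))
      (nhds ((1 - u0) ^ (b - a))) := by
  rcases le_total a b with hab | hab
  · exact aux_main a b u0 hu0 hu1 hab u hu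
  · have h := (aux_main b a u0 hu0 hu1 hab u hu).inv₀
      (ne_of_gt (Real.rpow_pos_of_pos (by linarith) _))
    have hval : ((1 - u0) ^ (a - b) : ℝ)⁻¹ = (1 - u0) ^ (b - a) := by
      rw [← Real.rpow_neg (by linarith), neg_sub]
    rw [hval] at h
    exact h.congr fun q => inv_div _ _
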